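/- If a measurable equivalence relation R on (X, μ) with countable classes is an increasing union of subrelations R_n, each of which has all classes finite, then R has cost at most 1. -/

import Mathlib

open MeasureTheory
open scoped ENNReal

/-- A graphing of a countable equivalence relation `R` on `(X, μ)`: a measurable symmetric
set of edges `E ⊆ R` whose connected components coincide with the `R`-classes. -/
structure Graphing (X : Type*) [MeasurableSpace X] (μ : Measure X) (R : X → X → Prop) where
  E : X → X → Prop
  symm : ∀ x y, E x y → E y x
  sub : ∀ ⦃x y⦄, E x y → R x y
  spans : ∀ ⦃x y⦄, R x y → Relation.ReflTransGen E x y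
  meas : MeasurableSet {q : X × X | E q.1 q.2}

/-- The cost of a graphing: half the integral of the degree. -/
noncomputable def Graphing.cost {X : Type*} [MeasurableSpace X] {μ : Measure X}
    {R : X → X → Prop} (g : Graphing X μ R) : ℝ≥0∞ :=
  (1 / 2) * ∫⁻ x, ({y | g.E x y}.encard : ℝ≥0∞) ∂μ

/-- The cost of a relation: the infimum of the costs of its graphings. -/
noncomputable def relCost (X : Type*) [MeasurableSpace X] (μ : Measure X)
    (R : X → X → Prop) : ℝ≥0∞ :=
  ⨅ g : Graphing X μ R, g.cost



open MeasureTheory Set Function PiNat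

namespace CostProof

variable {α : Type*} [TopologicalSpace α] [T2Space α] [MeasurableSpace α] [OpensMeasurableSpace α]

/-- A countable family admits a Borel envelope family with empty intersection. -/
def SepFam (S : ℕ → Set α) : Prop :=
  ∃ B : ℕ → Set α, (∀ i, MeasurableSet (B i)) ∧ (∀ i, S i ⊆ B i) ∧ (⋂ i, B i) = ∅

theorem sepFam_of_forall_update {S : ℕ → Set α} {j : ℕ} {T : ℕ → Set α}
    (hS : S j ⊆ ⋃ k, T k) (h : ∀ k, SepFam (Function.update S j (T k))) : SepFam S := by
  choose B hBmeas hBsub hBempty using h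
  refine ⟨fun i => if i = j then ⋃ k, B k j else ⋂ k, B k i, ?_, ?_, ?_⟩
  · intro i
    by_cases hij : i = j <;> simp only [hij, if_pos, if_neg, if_true]
    · simpa using MeasurableSet.iUnion fun k => hBmeas k j
    · simpa [hij] using MeasurableSet.iInter fun k => hBmeas k i
  · intro i
    by_cases hij : i = j
    · rw [hij]
      simp only [if_pos rfl]
      refine hS.trans (iUnion_subset fun k => ?_)
      refine subset_iUnion_of_subset k ?_
      have := hBsub k j
      simpa using this
    · simp only [if_neg hij]
      refine subset_iInter fun k => ?_
      have := hBsub k i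
      simpa [Function.update_of_ne hij] using this
  · ext x
    simp only [mem_iInter, mem_empty_iff_false, iff_false]
    intro hx
    have hxj := hx j
    simp only [if_pos rfl] at hxj
    obtain ⟨k, hk⟩ : ∃ k, x ∈ B k j := by simpa using hxj
    have : x ∈ ⋂ i, B k i := by
      refine mem_iInter.2 fun i => ?_
      by_cases hij : i = j
      · subst hij; exact hk
      · have := hx i
        simp only [if_neg hij] at this
        exact mem_iInter.1 this k
    rw [hBempty k] at this
    exact this

end CostProof

namespace CostProof

set_option linter.unusedSectionVars false

variable {α : Type*} [TopologicalSpace α] [T2Space α] [MeasurableSpace α] [OpensMeasurableSpace α]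

/-- The family of images of cylinders described by depths `m` and centers `c`. -/
def Fam (f : ℕ → (ℕ → ℕ) → α) (m : ℕ → ℕ) (c : ℕ → ℕ → ℕ) : ℕ → Set α :=
  fun j => f j '' cylinder (c j) (m j)

def Bad (f : ℕ → (ℕ → ℕ) → α) (p : (ℕ → ℕ) × (ℕ → ℕ → ℕ)) : Prop :=
  ¬ SepFam (Fam f p.1 p.2)

theorem exists_refine {f : ℕ → (ℕ → ℕ) → α} {m : ℕ → ℕ} {c : ℕ → ℕ → ℕ}
    (hbad : ¬ SepFam (Fam f m c)) (j : ℕ) :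
    ∃ c' : ℕ → ℕ → ℕ, (∀ i, i ≠ j → c' i = c i) ∧ (∀ k, k < m j → c' j k = c j k) ∧
      ¬ SepFam (Fam f (Function.update m j (m j + 1)) c') := by
  by_contra h
  push_neg at h
  apply hbad
  refine sepFam_of_forall_update (S := Fam f m c) (j := j)
    (T := fun k => f j '' cylinder (Function.update (c j) (m j) k) (m j + 1)) ?_ ?_
  · have : Fam f m c j = f j '' cylinder (c j) (m j) := rfl
    rw [this, ← iUnion_cylinder_update (c j) (m j), image_iUnion]
  · intro k
    set c' : ℕ → ℕ → ℕ := Function.update c j (Function.update (c j) (m j) k) with hc'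
    have h1 : ∀ i, i ≠ j → c' i = c i := fun i hij => Function.update_of_ne hij _ _
    have h2 : ∀ k', k' < m j → c' j k' = c j k' := by
      intro k' hk'
      have : c' j = Function.update (c j) (m j) k := Function.update_self _ _ _
      rw [this, Function.update_of_ne hk'.ne _ _]
    have := h c' h1 h2
    have heq : Function.update (Fam f m c) j
        (f j '' cylinder (Function.update (c j) (m j) k) (m j + 1))
        = Fam f (Function.update m j (m j + 1)) c' := by
      funext i
      by_cases hij : i = j
      · subst hij
        rw [Function.update_self]
        have e1 : Function.update m i (m i + 1) i = m i + 1 := Function.update_self _ _ _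
        have e2 : c' i = Function.update (c i) (m i) k := Function.update_self _ _ _
        simp only [Fam, e1, e2]
      · rw [Function.update_of_ne hij]
        have e1 : Function.update m j (m j + 1) i = m i := Function.update_of_ne hij _ _
        simp only [Fam, e1, h1 i hij]
    rw [heq]
    exact this

variable (f : ℕ → (ℕ → ℕ) → α)

/-- One refinement step at index `j`. -/
noncomputable def nxt (p : {p : (ℕ → ℕ) × (ℕ → ℕ → ℕ) // Bad f p}) (j : ℕ) :
    {p : (ℕ → ℕ) × (ℕ → ℕ → ℕ) // Bad f p} :=
  ⟨(Function.update p.1.1 j (p.1.1 j + 1), (exists_refine p.2 j).choose),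
    (exists_refine p.2 j).choose_spec.2.2⟩

/-- The iterated bad states. -/
noncomputable def seqq (h₀ : Bad f (fun _ => 0, fun _ _ => 0)) : ℕ → {p : (ℕ → ℕ) × (ℕ → ℕ → ℕ) // Bad f p}
  | 0 => ⟨(fun _ => 0, fun _ _ => 0), h₀⟩
  | (t+1) => nxt f (seqq h₀ t) (Nat.unpair t).1

end CostProof

namespace CostProof

set_option linter.unusedSectionVars false
set_option maxHeartbeats 1000000

open Metric in
/-- **Novikov separation theorem** for ranges: countably many analytic sets (given as ranges of
continuous functions on Baire space) with empty intersection admit Borel envelopes with empty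
intersection. -/
theorem novikov_ranges {α : Type*} [TopologicalSpace α] [T2Space α] [MeasurableSpace α]
    [OpensMeasurableSpace α] (f : ℕ → (ℕ → ℕ) → α) (hf : ∀ i, Continuous (f i))
    (hdisj : (⋂ i, Set.range (f i)) = ∅) :
    ∃ B : ℕ → Set α, (∀ i, MeasurableSet (B i)) ∧ (∀ i, Set.range (f i) ⊆ B i) ∧
      (⋂ i, B i) = ∅ := by
  by_contra hcon
  have h₀ : Bad f (fun _ => 0, fun _ _ => 0) := by
    rintro ⟨B, h1, h2, h3⟩
    exact hcon ⟨B, h1, fun i => by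
      have := h2 i
      simpa [Fam, cylinder_zero] using this, h3⟩
  set q := seqq f h₀ with hq
  set m : ℕ → ℕ → ℕ := fun t => (q t).1.1 with hm
  set c : ℕ → ℕ → ℕ → ℕ := fun t => (q t).1.2 with hc
  -- basic step equations
  have hm_succ : ∀ t, m (t+1) = Function.update (m t) ((Nat.unpair t).1) (m t ((Nat.unpair t).1) + 1) := by
    intro t; rfl
  have hc_succ_ne : ∀ t i, i ≠ (Nat.unpair t).1 → c (t+1) i = c t i := by
    intro t i hi
    exact (exists_refine (q t).2 ((Nat.unpair t).1)).choose_spec.1 i hi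
  have hc_succ_eq : ∀ t k, k < m t ((Nat.unpair t).1) → c (t+1) ((Nat.unpair t).1) k = c t ((Nat.unpair t).1) k := by
    intro t k hk
    exact (exists_refine (q t).2 ((Nat.unpair t).1)).choose_spec.2.1 k hk
  -- monotonicity of depths
  have hm_mono : ∀ j, Monotone (fun t => m t j) := by
    intro j
    apply monotone_nat_of_le_succ
    intro t
    rw [hm_succ t]
    by_cases hj : j = (Nat.unpair t).1
    · subst hj; rw [Function.update_self]; omega
    · rw [Function.update_of_ne hj]
  -- centers are stable below current depth
  have hstable : ∀ s t, s ≤ t → ∀ j k, k < m s j → c t j k = c s j k := by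
    intro s t hst
    induction t, hst using Nat.le_induction with
    | base => intro j k _; rfl
    | succ t hst IH =>
      intro j k hk
      by_cases hj : j = (Nat.unpair t).1
      · rw [hj] at hk ⊢
        rw [hc_succ_eq t k (lt_of_lt_of_le hk (hm_mono _ hst))]
        exact IH _ k hk
      · rw [hc_succ_ne t j hj]
        exact IH j k hk
  -- depths tend to infinity
  have hgrow : ∀ j N, ∃ t, N ≤ m t j := by
    intro j N
    induction N with
    | zero => exact ⟨0, Nat.zero_le _⟩
    | succ N IH =>
      obtain ⟨t, ht⟩ := IH
      refine ⟨Nat.pair j t + 1, ?_⟩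
      have h1 : (Nat.unpair (Nat.pair j t)).1 = j := by simp
      rw [hm_succ]
      rw [h1, Function.update_self]
      have : m t j ≤ m (Nat.pair j t) j := hm_mono j (Nat.right_le_pair j t)
      omega
  -- the limit points
  have hex : ∀ j k, ∃ t, k + 1 ≤ m t j := fun j k => hgrow j (k+1)
  set x : ℕ → ℕ → ℕ := fun j k => c (Nat.find (hex j k)) j k with hx
  have hxval : ∀ t j k, k < m t j → c t j k = x j k := by
    intro t j k hk
    have h1 : Nat.find (hex j k) ≤ t := Nat.find_min' (hex j k) hk
    have h2 : k < m (Nat.find (hex j k)) j := Nat.find_spec (hex j k)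
    exact hstable _ t h1 j k h2
  have hcyl : ∀ t j, cylinder (c t j) (m t j) ⊆ cylinder (x j) (m t j) := by
    intro t j z hz
    rw [mem_cylinder_iff] at hz ⊢
    intro i hi
    rw [hz i hi]
    exact hxval t j i hi
  -- two distinct limit values
  obtain ⟨a, b, hab⟩ : ∃ a b, f a (x a) ≠ f b (x b) := by
    by_contra hall
    push_neg at hall
    have : f 0 (x 0) ∈ ⋂ i, Set.range (f i) := by
      refine Set.mem_iInter.2 fun i => ?_
      rw [hall 0 i]
      exact Set.mem_range_self _
    rw [hdisj] at this
    exact this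
  have hab' : a ≠ b := fun h => hab (by rw [h])
  obtain ⟨u, v, u_open, v_open, hyu, hyv, huv⟩ :
      ∃ u v : Set α, IsOpen u ∧ IsOpen v ∧ f a (x a) ∈ u ∧ f b (x b) ∈ v ∧ Disjoint u v :=
    t2_separation hab
  letI : MetricSpace (ℕ → ℕ) := metricSpaceNatNat
  obtain ⟨εa, εapos, hεa⟩ : ∃ εa : ℝ, εa > 0 ∧ Metric.ball (x a) εa ⊆ f a ⁻¹' u := by
    apply Metric.mem_nhds_iff.1
    exact (hf a).continuousAt.preimage_mem_nhds (u_open.mem_nhds hyu)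
  obtain ⟨εb, εbpos, hεb⟩ : ∃ εb : ℝ, εb > 0 ∧ Metric.ball (x b) εb ⊆ f b ⁻¹' v := by
    apply Metric.mem_nhds_iff.1
    exact (hf b).continuousAt.preimage_mem_nhds (v_open.mem_nhds hyv)
  obtain ⟨n, hn⟩ : ∃ n : ℕ, (1 / 2 : ℝ) ^ n < min εa εb :=
    exists_pow_lt_of_lt_one (lt_min εapos εbpos) (by norm_num)
  obtain ⟨ta, hta⟩ := hgrow a n
  obtain ⟨tb, htb⟩ := hgrow b n
  set t := max ta tb with htdef
  have hna : n ≤ m t a := le_trans hta (hm_mono a (le_max_left _ _))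
  have hnb : n ≤ m t b := le_trans htb (hm_mono b (le_max_right _ _))
  -- the current family at time t is separated, contradiction
  apply (q t).2
  refine ⟨fun i => if i = a then u else if i = b then v else Set.univ, ?_, ?_, ?_⟩
  · intro i
    by_cases hia : i = a
    · simp only [hia, if_pos rfl]; exact u_open.measurableSet
    · by_cases hib : i = b
      · simp only [if_neg hia, if_pos hib]; exact v_open.measurableSet
      · simp only [if_neg hia, if_neg hib]; exact MeasurableSet.univ
  · intro i
    by_cases hia : i = a
    · subst hia
      simp only [if_pos rfl]
      have : Fam f (m t) (c t) i = f i '' cylinder (c t i) (m t i) := rfl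
      rw [this, Set.image_subset_iff]
      refine subset_trans ?_ hεa
      intro z hz
      have hz2 : z ∈ cylinder (x i) n := cylinder_anti _ hna (hcyl t i hz)
      have : dist z (x i) ≤ (1/2 : ℝ) ^ n := mem_cylinder_iff_dist_le.1 hz2
      exact Metric.mem_ball.2 (lt_of_le_of_lt this (lt_of_lt_of_le hn (min_le_left _ _)))
    · by_cases hib : i = b
      · subst hib
        simp only [if_neg hia, if_pos rfl]
        have : Fam f (m t) (c t) i = f i '' cylinder (c t i) (m t i) := rfl
        rw [this, Set.image_subset_iff]
        refine subset_trans ?_ hεb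
        intro z hz
        have hz2 : z ∈ cylinder (x i) n := cylinder_anti _ hnb (hcyl t i hz)
        have : dist z (x i) ≤ (1/2 : ℝ) ^ n := mem_cylinder_iff_dist_le.1 hz2
        exact Metric.mem_ball.2 (lt_of_le_of_lt this (lt_of_lt_of_le hn (min_le_right _ _)))
      · simp only [if_neg hia, if_neg hib]
        exact Set.subset_univ _
  · ext z
    simp only [Set.mem_iInter, Set.mem_empty_iff_false, iff_false]
    intro hz
    have h1 := hz a
    have h2 := hz b
    simp only [if_pos rfl] at h1
    simp only [if_neg (Ne.symm hab'), if_pos rfl] at h2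
    exact Set.disjoint_left.1 huv h1 h2

end CostProof

namespace CostProof

/-- **Novikov separation theorem**: countably many analytic sets with empty intersection are
contained in Borel sets with empty intersection. -/
theorem novikov_analytic {α : Type*} [TopologicalSpace α] [T2Space α] [MeasurableSpace α]
    [OpensMeasurableSpace α] (A : ℕ → Set α) (hA : ∀ i, AnalyticSet (A i))
    (hdisj : (⋂ i, A i) = ∅) :
    ∃ B : ℕ → Set α, (∀ i, MeasurableSet (B i)) ∧ (∀ i, A i ⊆ B i) ∧ (⋂ i, B i) = ∅ := by
  by_cases hemp : ∃ i₀, A i₀ = ∅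
  · obtain ⟨i₀, hi₀⟩ := hemp
    refine ⟨fun i => if i = i₀ then ∅ else Set.univ, ?_, ?_, ?_⟩
    · intro i; by_cases h : i = i₀ <;> simp [h]
    · intro i; by_cases h : i = i₀
      · subst h; simp [hi₀]
      · simp [h]
    · ext x; simp only [Set.mem_iInter, Set.mem_empty_iff_false, iff_false]
      intro hx; have := hx i₀; simp at this
  · push_neg at hemp
    have hf : ∀ i, ∃ f : (ℕ → ℕ) → α, Continuous f ∧ Set.range f = A i := by
      intro i
      have := hA i
      rw [AnalyticSet] at this
      rcases this with h | h
      · exact absurd h (Set.nonempty_iff_ne_empty.1 (hemp i))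
      · exact h
    choose f hfc hfr using hf
    obtain ⟨B, h1, h2, h3⟩ := novikov_ranges f hfc (by simp only [hfr]; exact hdisj)
    exact ⟨B, h1, fun i => (hfr i) ▸ h2 i, h3⟩

end CostProof

namespace CostProof

open Set

set_option maxHeartbeats 1000000

/-- Lusin–Novikov style selectors: a measurable subset of `X × X` with finite sections is
covered by countably many measurable functions. -/
theorem exists_selectors {X : Type*} [MeasurableSpace X] [StandardBorelSpace X]
    (Q : Set (X × X)) (hQ : MeasurableSet Q) (hfin : ∀ x, {y | (x, y) ∈ Q}.Finite) :
    ∃ g : ℕ → X → X, (∀ i, Measurable (g i)) ∧ ∀ p ∈ Q, ∃ i, g i p.1 = p.2 := by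
  classical
  by_cases hQe : Q = ∅
  · exact ⟨fun _ x => x, fun _ => measurable_id, by simp [hQe]⟩
  obtain ⟨f, hf⟩ := exists_measurableEmbedding_real X
  haveI : StandardBorelSpace Q := hQ.standardBorel
  letI := upgradeStandardBorel Q
  have hZne : Nonempty Q := by
    rcases Set.nonempty_iff_ne_empty.2 hQe with ⟨p, hp⟩
    exact ⟨⟨p, hp⟩⟩
  obtain ⟨b, hbc, hbne', hbb⟩ := TopologicalSpace.exists_countable_basis Q
  have hbne : b.Nonempty := by
    rcases hZne with ⟨z⟩
    have : z ∈ ⋃₀ b := by rw [hbb.sUnion_eq]; trivial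
    rcases this with ⟨t, htb, _⟩
    exact ⟨t, htb⟩
  obtain ⟨u, hu⟩ := hbc.exists_eq_range hbne
  -- the projection to the first coordinate
  set π : Q → X := fun z => (z : X × X).1 with hπ
  have hπm : Measurable π := measurable_fst.comp measurable_subtype_coe
  have hπfib : ∀ z : Q, {z' : Q | π z' = π z}.Finite := by
    intro z
    apply Set.Finite.of_finite_image (f := fun z' : Q => (z' : X × X).2)
    · apply Set.Finite.subset (hfin (π z))
      rintro y ⟨z', hz', rfl⟩
      simp only [Set.mem_setOf_eq]
      rw [← hz']
      show ((z' : X × X).1, (z' : X × X).2) ∈ Q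
      rw [Prod.mk.eta]
      exact z'.2
    · rintro z1 h1 z2 h2 he
      apply Subtype.ext
      have : (z1 : X × X).1 = (z2 : X × X).1 := by
        rw [show (z1 : X × X).1 = π z1 from rfl, show (z2 : X × X).1 = π z2 from rfl, h1, h2]
      exact Prod.ext this he
  -- the bad analytic sets
  set W : ℕ → Set (Q × Q) := fun i =>
    {p : Q × Q | p.2 ∈ u i ∧ p.1 ≠ p.2 ∧ f (π p.1) = f (π p.2)} with hW
  have hWm : ∀ i, MeasurableSet (W i) := by
    intro i
    apply MeasurableSet.inter
    · exact measurable_snd ((hbb.isOpen (hu ▸ Set.mem_range_self i)).measurableSet)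
    apply MeasurableSet.inter
    · have : IsClosed {p : Q × Q | p.1 = p.2} := isClosed_eq continuous_fst continuous_snd
      exact (this.measurableSet).compl
    · have hm : Measurable fun p : Q × Q => (f (π p.1), f (π p.2)) :=
        ((hf.measurable.comp hπm).comp measurable_fst).prodMk
          ((hf.measurable.comp hπm).comp measurable_snd)
      have : IsClosed {q : ℝ × ℝ | q.1 = q.2} := isClosed_eq continuous_fst continuous_snd
      exact hm this.measurableSet
  set A : ℕ → Set Q := fun i => (Prod.fst '' W i) ∪ (u i)ᶜ with hA
  have hAan : ∀ i, AnalyticSet (A i) := by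
    intro i
    rw [show A i = Prod.fst '' W i ∪ (u i)ᶜ from rfl, Set.union_eq_iUnion]
    refine AnalyticSet.iUnion fun bb => ?_
    cases bb
    · simp only [cond_false]
      exact ((hbb.isOpen (hu ▸ Set.mem_range_self i)).measurableSet).compl.analyticSet
    · simp only [cond_true]
      exact (hWm i).analyticSet_image measurable_fst
  have hAdisj : (⋂ i, A i) = ∅ := by
    ext z
    simp only [Set.mem_iInter, Set.mem_empty_iff_false, iff_false]
    intro hz
    -- find a basis element isolating z in its fiber
    set K : Set Q := {z' : Q | π z' = π z} \ {z} with hK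
    have hKfin : K.Finite := (hπfib z).subset Set.diff_subset
    have hKcl : IsClosed K := hKfin.isClosed
    have hzK : z ∈ Kᶜ := by simp [hK]
    obtain ⟨t, htb, hzt, hts⟩ := hbb.exists_subset_of_mem_open hzK hKcl.isOpen_compl
    obtain ⟨i, rfl⟩ : ∃ i, u i = t := by
      have := htb
      rw [hu] at this
      rcases this with ⟨i, hi⟩
      exact ⟨i, hi⟩
    have := hz i
    rcases this with h | h
    · rcases h with ⟨p, hpW, hp1⟩
      rcases hpW with ⟨hp2u, hpne, hpπ⟩
      have hπeq : π p.2 = π z := by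
        have := hf.injective hpπ
        rw [← this, hp1]
      have : p.2 ∈ K := by
        refine ⟨hπeq, ?_⟩
        simp only [Set.mem_singleton_iff]
        intro he
        exact hpne (by rw [hp1, ← he])
      exact (hts hp2u) this
    · exact h hzt
  obtain ⟨B, hBm, hBsub, hBdisj⟩ := novikov_analytic A hAan hAdisj
  set Zi : ℕ → Set Q := fun i => (B i)ᶜ with hZi
  have hZim : ∀ i, MeasurableSet (Zi i) := fun i => (hBm i).compl
  have hZicov : ∀ z : Q, ∃ i, z ∈ Zi i := by
    intro z
    by_contra h
    push_neg at h
    have : z ∈ ⋂ i, B i := Set.mem_iInter.2 fun i => by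
      have := h i
      simpa [hZi] using this
    rw [hBdisj] at this
    exact this
  have hZiinj : ∀ i, Set.InjOn π (Zi i) := by
    intro i z1 h1 z2 h2 he
    by_contra hne
    have hz1u : z1 ∈ u i := by
      by_contra hz1u
      exact h1 (hBsub i (Or.inr hz1u))
    have hz2u : z2 ∈ u i := by
      by_contra hz2u
      exact h2 (hBsub i (Or.inr hz2u))
    have : z1 ∈ Prod.fst '' W i := ⟨(z1, z2), ⟨hz2u, hne, by rw [he]⟩, rfl⟩
    exact h1 (hBsub i (Or.inl this))
  -- push down to X × X
  set T : ℕ → Set (X × X) := fun i => (Subtype.val '' Zi i) with hT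
  have hTm : ∀ i, MeasurableSet (T i) :=
    fun i => (MeasurableEmbedding.subtype_coe hQ).measurableSet_image.2 (hZim i)
  have hTinj : ∀ i, Set.InjOn Prod.fst (T i) := by
    rintro i p1 ⟨z1, hz1, rfl⟩ p2 ⟨z2, hz2, rfl⟩ he
    exact congrArg Subtype.val (hZiinj i hz1 hz2 he)
  have hTQ : ∀ i, T i ⊆ Q := by
    rintro i p ⟨z, _, rfl⟩
    exact z.2
  -- the selector functions
  set g : ℕ → X → X := fun i x => if h : ∃ y, (x, y) ∈ T i then h.choose else x with hg
  have hgval : ∀ i x y, (x, y) ∈ T i → g i x = y := by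
    intro i x y hxy
    have hex : ∃ y, (x, y) ∈ T i := ⟨y, hxy⟩
    have h1 : (x, hex.choose) ∈ T i := hex.choose_spec
    have := hTinj i h1 hxy rfl
    have h2 : hex.choose = y := congrArg Prod.snd this
    simp only [hg, dif_pos hex]
    exact h2
  have hgm : ∀ i, Measurable (g i) := by
    intro i
    intro s hs
    have hset : g i ⁻¹' s =
        (Prod.fst '' (T i ∩ Prod.snd ⁻¹' s)) ∪ ((Prod.fst '' T i)ᶜ ∩ s) := by
      ext x
      simp only [Set.mem_preimage, Set.mem_union, Set.mem_inter_iff, Set.mem_image,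
        Set.mem_compl_iff]
      constructor
      · intro hx
        by_cases hex : ∃ y, (x, y) ∈ T i
        · left
          refine ⟨(x, hex.choose), ⟨hex.choose_spec, ?_⟩, rfl⟩
          have : g i x = hex.choose := by simp only [hg, dif_pos hex]
          rwa [this] at hx
        · right
          constructor
          · rintro ⟨p, hp, hp1⟩
            exact hex ⟨p.2, by rw [← hp1]; simpa using hp⟩
          · have : g i x = x := by simp only [hg, dif_neg hex]
            rwa [this] at hx
      · rintro (⟨p, ⟨hpT, hps⟩, rfl⟩ | ⟨hnx, hxs⟩)
        · have : g i p.1 = p.2 := hgval i p.1 p.2 (by rwa [Prod.mk.eta])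
          rwa [this]
        · have hex : ¬ ∃ y, (x, y) ∈ T i := by
            rintro ⟨y, hy⟩
            exact hnx ⟨(x, y), hy, rfl⟩
          have : g i x = x := by simp only [hg, dif_neg hex]
          rwa [this]
    rw [hset]
    apply MeasurableSet.union
    · exact MeasurableSet.image_of_measurable_injOn
        ((hTm i).inter (measurable_snd hs)) measurable_fst
        ((hTinj i).mono Set.inter_subset_left)
    · exact (MeasurableSet.image_of_measurable_injOn (hTm i) measurable_fst (hTinj i)).compl.inter hs
  refine ⟨g, hgm, ?_⟩
  rintro ⟨x, y⟩ hp
  obtain ⟨i, hi⟩ := hZicov ⟨(x, y), hp⟩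
  refine ⟨i, hgval i x y ?_⟩
  exact ⟨⟨(x, y), hp⟩, hi, rfl⟩

end CostProof

namespace CostProof

set_option maxHeartbeats 4000000
theorem cost_le_one {X : Type*} [MeasurableSpace X] [StandardBorelSpace X]
    (μ : Measure X) [IsProbabilityMeasure μ]
    (R : X → X → Prop) (hR : Equivalence R)
    (Rn : ℕ → X → X → Prop) (hRn : ∀ n, Equivalence (Rn n))
    (hmeasn : ∀ n, MeasurableSet {q : X × X | Rn n q.1 q.2})
    (hmono : ∀ n x y, Rn n x y → Rn (n + 1) x y)
    (hfin : ∀ n x, {y | Rn n x y}.Finite)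
    (hunion : ∀ x y, R x y ↔ ∃ n, Rn n x y) :
    ∃ E : X → X → Prop,
      (∀ x y, E x y → E y x) ∧ (∀ ⦃x y⦄, E x y → R x y) ∧
      (∀ ⦃x y⦄, R x y → Relation.ReflTransGen E x y) ∧
      MeasurableSet {q : X × X | E q.1 q.2} ∧
      (∀ x, ({y | E x y}).encard ≤ 2) := by
  classical
  obtain ⟨f, hf⟩ := MeasureTheory.exists_measurableEmbedding_real X
  -- an injective measurable map into ℝ≥0∞
  set F : X → ℝ≥0∞ := fun x => ENNReal.ofReal (Real.exp (f x)) with hFdef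
  have hFinj : Function.Injective F := by
    intro a b hab
    apply hf.injective
    apply Real.exp_injective
    rw [hFdef] at hab
    simpa [ENNReal.ofReal_eq_ofReal_iff, (Real.exp_pos _).le] using hab
  have hFmeas : Measurable F :=
    ENNReal.measurable_ofReal.comp (Real.measurable_exp.comp hf.measurable)
  -- the filtration starting with equality
  set S : ℕ → X → X → Prop :=
    fun n => Nat.casesOn n (fun a b => a = b) (fun k => Rn k) with hSdef
  have hSeq : ∀ n, Equivalence (S n) := by
    intro n
    cases n with
    | zero => exact eq_equivalence
    | succ k => exact hRn k
  have hSsub : ∀ n x y, S n x y → S (n + 1) x y := by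
    intro n x y h
    cases n with
    | zero => cases h; exact (hRn 0).refl x
    | succ k => exact hmono k x y h
  have hSle : ∀ m n, m ≤ n → ∀ x y, S m x y → S n x y := by
    intro m n hmn
    induction n, hmn using Nat.le_induction with
    | base => exact fun x y h => h
    | succ n _ IH => exact fun x y h => hSsub n x y (IH x y h)
  have hSfin : ∀ n x, {y | S n x y}.Finite := by
    intro n x
    cases n with
    | zero =>
      have : {y | S 0 x y} = {x} := by ext y; simp [hSdef, eq_comm]
      rw [this]; exact Set.finite_singleton x
    | succ k => exact hfin k x
  have hSR : ∀ n x y, S n x y → R x y := by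
    intro n x y h
    cases n with
    | zero => cases h; exact hR.refl x
    | succ k => exact (hunion x y).2 ⟨k, h⟩
  have hSmeas : ∀ n, MeasurableSet {q : X × X | S n q.1 q.2} := by
    intro n
    cases n with
    | zero =>
      have he : {q : X × X | S 0 q.1 q.2} =
          (fun q : X × X => (f q.1, f q.2)) ⁻¹' {r : ℝ × ℝ | r.1 = r.2} := by
        ext q
        simp only [Set.mem_setOf_eq, Set.mem_preimage, hSdef]
        exact ⟨fun h => by rw [h], fun h => hf.injective h⟩
      rw [he]
      exact ((hf.measurable.comp measurable_fst).prodMk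
        (hf.measurable.comp measurable_snd))
        (isClosed_eq continuous_fst continuous_snd).measurableSet
    | succ k => exact hmeasn k
  -- countable measurable selectors covering R
  have hsel : ∀ n, ∃ g : ℕ → X → X, (∀ i, Measurable (g i)) ∧
      ∀ p ∈ {q : X × X | Rn n q.1 q.2}, ∃ i, g i p.1 = p.2 :=
    fun n => exists_selectors _ (hmeasn n) (fun x => hfin n x)
  choose gs hgsm hgscov using hsel
  set g : ℕ → X → X := fun k => gs (Nat.unpair k).1 (Nat.unpair k).2 with hgdef
  have hgm : ∀ k, Measurable (g k) := fun k => hgsm _ _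
  have hgcov : ∀ x y, R x y → ∃ k, g k x = y := by
    intro x y hxy
    obtain ⟨n, hn⟩ := (hunion x y).1 hxy
    obtain ⟨i, hi⟩ := hgscov n (x, y) hn
    exact ⟨Nat.pair n i, by simpa [hgdef, Nat.unpair_pair] using hi⟩
  -- the minimum of F over the S n class
  set h : ℕ → X → ℝ≥0∞ :=
    fun n x => ⨅ i, if S n x (g i x) then F (g i x) else ⊤ with hhdef
  have hhm : ∀ n, Measurable (h n) := by
    intro n
    apply Measurable.iInf
    intro i
    apply Measurable.ite
    · exact (measurable_id.prodMk (hgm i)) (hSmeas n)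
    · exact hFmeas.comp (hgm i)
    · exact measurable_const
  have hhval : ∀ n x, h n x = sInf (F '' {y | S n x y}) := by
    intro n x
    apply le_antisymm
    · apply le_sInf
      rintro b ⟨y, hy, rfl⟩
      obtain ⟨k, hk⟩ := hgcov x y (hSR n x y hy)
      refine iInf_le_of_le k (le_of_eq ?_)
      rw [if_pos (by rwa [hk])]
      rw [hk]
    · apply le_iInf
      intro i
      by_cases hc : S n x (g i x)
      · rw [if_pos hc]
        exact sInf_le ⟨g i x, hc, rfl⟩
      · rw [if_neg hc]
        exact le_top
  have hhmem : ∀ n x, h n x ∈ F '' {y | S n x y} := by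
    intro n x
    rw [hhval]
    apply Set.Nonempty.csInf_mem
    · exact ⟨F x, x, (hSeq n).refl x, rfl⟩
    · exact (hSfin n x).image F
  have hheq : ∀ n x y, S n x y → h n x = h n y := by
    intro n x y hxy
    rw [hhval, hhval]
    congr 1
    apply congrArg
    ext z
    exact ⟨fun hz => (hSeq n).trans ((hSeq n).symm hxy) hz, fun hz => (hSeq n).trans hxy hz⟩
  have hhinj : ∀ n x y, h n x = h n y → S n x y := by
    intro n x y hxy
    obtain ⟨a, ha, hFa⟩ := hhmem n x
    obtain ⟨b, hb, hFb⟩ := hhmem n y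
    have : a = b := hFinj (by rw [hFa, hFb, hxy])
    subst this
    exact (hSeq n).trans ha ((hSeq n).symm hb)
  -- the strict order on classes
  set prec : X → X → Prop :=
    fun x y => ∃ n, S (n + 1) x y ∧ ¬ S n x y ∧ h n x < h n y with hprecdef
  have hlvluniq : ∀ n m x y, S (n + 1) x y → ¬ S n x y → S (m + 1) x y → ¬ S m x y → n = m := by
    intro n m x y h1 h2 h3 h4
    by_contra hne
    rcases Nat.lt_or_ge n m with hlt | hge
    · exact h4 (hSle (n + 1) m hlt x y h1)
    · have : m < n := lt_of_le_of_ne hge (Ne.symm hne)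
      exact h2 (hSle (m + 1) n this x y h3)
  have hprec_R : ∀ x y, prec x y → R x y := by
    rintro x y ⟨n, h1, _, _⟩
    exact hSR (n + 1) x y h1
  have hprec_irrefl : ∀ x, ¬ prec x x := by
    rintro x ⟨n, _, _, hlt⟩
    exact lt_irrefl _ hlt
  have hprec_total : ∀ x y, R x y → x ≠ y → prec x y ∨ prec y x := by
    intro x y hxy hne
    obtain ⟨n, hn⟩ := (hunion x y).1 hxy
    have hex : ∃ k, S k x y := ⟨n + 1, hn⟩
    set k₀ := Nat.find hex with hk₀
    have hk₀spec : S k₀ x y := Nat.find_spec hex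
    have hk₀ne : k₀ ≠ 0 := by
      intro h0
      rw [h0] at hk₀spec
      exact hne hk₀spec
    obtain ⟨m, hm⟩ : ∃ m, k₀ = m + 1 := ⟨k₀ - 1, by omega⟩
    have hSm1 : S (m + 1) x y := hm ▸ hk₀spec
    have hSm : ¬ S m x y := Nat.find_min hex (by omega)
    have hne2 : h m x ≠ h m y := fun he => hSm (hhinj m x y he)
    rcases lt_or_gt_of_ne hne2 with hlt | hgt
    · exact Or.inl ⟨m, hSm1, hSm, hlt⟩
    · refine Or.inr ⟨m, (hSeq (m + 1)).symm hSm1, fun hc => hSm ((hSeq m).symm hc), hgt⟩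
  have hprec_trans : ∀ x y z, prec x y → prec y z → prec x z := by
    rintro x y z ⟨n1, ha1, ha2, ha3⟩ ⟨n2, hb1, hb2, hb3⟩
    rcases lt_trichotomy n1 n2 with hlt | heq | hgt
    · -- n1 < n2
      have hSxy : S n2 x y := hSle (n1 + 1) n2 hlt x y ha1
      have heq2 : h n2 x = h n2 y := hheq n2 x y hSxy
      refine ⟨n2, (hSeq (n2 + 1)).trans (hSle (n1+1) (n2+1) (by omega) x y ha1) hb1, ?_, ?_⟩
      · intro hc
        exact hb2 ((hSeq n2).trans ((hSeq n2).symm hSxy) hc)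
      · rw [heq2]; exact hb3
    · subst heq
      refine ⟨n1, (hSeq (n1 + 1)).trans ha1 hb1, ?_, lt_trans ha3 hb3⟩
      intro hc
      have : h n1 x = h n1 z := hheq n1 x z hc
      rw [this] at ha3
      exact absurd (lt_trans ha3 hb3) (lt_irrefl _)
    · -- n2 < n1
      have hSyz : S n1 y z := hSle (n2 + 1) n1 hgt y z hb1
      have heq2 : h n1 y = h n1 z := hheq n1 y z hSyz
      refine ⟨n1, (hSeq (n1 + 1)).trans ha1 (hSle (n2+1) (n1+1) (by omega) y z hb1), ?_, ?_⟩
      · intro hc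
        exact ha2 ((hSeq n1).trans hc ((hSeq n1).symm hSyz))
      · rw [← heq2]; exact ha3
  have hinterval : ∀ k x y z, S k x y → prec x z → prec z y → S k x z := by
    intro k x y z hk hxz hzy
    by_contra hne
    obtain ⟨n, h1, h2, h3⟩ := hxz
    have hkn : k ≤ n := by
      by_contra hc
      exact hne (hSle (n + 1) k (by omega) x z h1)
    have hSnxy : S n x y := hSle k n hkn x y hk
    obtain ⟨m, m1, m2, m3⟩ := hzy
    have hSn1zy : S (n + 1) z y := (hSeq (n + 1)).trans ((hSeq (n + 1)).symm h1)
      (hSle k (n + 1) (by omega) x y hk)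
    have hnotzy : ¬ S n z y := by
      intro hc
      exact h2 ((hSeq n).trans hSnxy ((hSeq n).symm hc))
    have hmn : m = n := hlvluniq m n z y m1 m2 hSn1zy hnotzy
    subst hmn
    have : h m z < h m x := by
      rw [hheq m x y hSnxy]
      exact m3
    exact absurd (lt_trans h3 this) (lt_irrefl _)
  -- adjacency: immediate successor
  set adj : X → X → Prop :=
    fun x y => prec x y ∧ ∀ i, ¬ (prec x (g i x) ∧ prec (g i x) y) with hadjdef
  set E : X → X → Prop := fun x y => adj x y ∨ adj y x with hEdef
  have hadj_nb : ∀ x y, adj x y → ∀ z, ¬ (prec x z ∧ prec z y) := by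
    rintro x y ⟨h1, h2⟩ z ⟨hz1, hz2⟩
    obtain ⟨i, hi⟩ := hgcov x z (hprec_R x z hz1)
    exact h2 i (by rw [hi]; exact ⟨hz1, hz2⟩)
  have hEsymm : ∀ x y, E x y → E y x := by
    rintro x y (h | h)
    · exact Or.inr h
    · exact Or.inl h
  have hEsub : ∀ x y, E x y → R x y := by
    rintro x y (h | h)
    · exact hprec_R x y h.1
    · exact hR.symm (hprec_R y x h.1)
  -- spanning
  have hRTGsymm : ∀ x y, Relation.ReflTransGen E x y → Relation.ReflTransGen E y x := by
    intro x y hxy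
    haveI : Std.Symm E := ⟨fun a b hab => hEsymm a b hab⟩
    exact Std.Symm.symm _ _ hxy
  have hTfin : ∀ n a b, S n a b → ({z | prec a z ∧ prec z b}).Finite := by
    intro n a b hab
    apply (hSfin n a).subset
    intro z hz
    exact hinterval n a b z hab hz.1 hz.2
  have hspan_aux : ∀ N n x y, S n x y → prec x y → ({z | prec x z ∧ prec z y}).ncard < N →
      Relation.ReflTransGen E x y := by
    intro N
    induction N with
    | zero => intro n x y _ _ hc; exact absurd hc (Nat.not_lt_zero _)
    | succ N IH =>
      intro n x y hxy hp hcard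
      by_cases hT : ∃ z, prec x z ∧ prec z y
      · obtain ⟨z, hz1, hz2⟩ := hT
        have hSxz : S n x z := hinterval n x y z hxy hz1 hz2
        have hSzy : S n z y := (hSeq n).trans ((hSeq n).symm hSxz) hxy
        have hsub1 : {w | prec x w ∧ prec w z} ⊂ {w | prec x w ∧ prec w y} := by
          constructor
          · rintro w ⟨hw1, hw2⟩
            exact ⟨hw1, hprec_trans w z y hw2 hz2⟩
          · intro hcont
            have : z ∈ {w | prec x w ∧ prec w z} := hcont ⟨hz1, hz2⟩
            exact hprec_irrefl z this.2
        have hsub2 : {w | prec z w ∧ prec w y} ⊂ {w | prec x w ∧ prec w y} := by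
          constructor
          · rintro w ⟨hw1, hw2⟩
            exact ⟨hprec_trans x z w hz1 hw1, hw2⟩
          · intro hcont
            have : z ∈ {w | prec z w ∧ prec w y} := hcont ⟨hz1, hz2⟩
            exact hprec_irrefl z this.1
        have hc1 : ({w | prec x w ∧ prec w z}).ncard < N := by
          have := Set.ncard_lt_ncard hsub1 (hTfin n x y hxy)
          omega
        have hc2 : ({w | prec z w ∧ prec w y}).ncard < N := by
          have := Set.ncard_lt_ncard hsub2 (hTfin n x y hxy)
          omega
        exact Relation.ReflTransGen.trans (IH n x z hSxz hz1 hc1) (IH n z y hSzy hz2 hc2)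
      · push_neg at hT
        refine Relation.ReflTransGen.single (Or.inl ⟨hp, ?_⟩)
        intro i hcon
        exact hT (g i x) hcon.1 hcon.2
  have hspan : ∀ x y, R x y → Relation.ReflTransGen E x y := by
    intro x y hxy
    rcases eq_or_ne x y with rfl | hne
    · exact Relation.ReflTransGen.refl
    obtain ⟨n, hn⟩ := (hunion x y).1 hxy
    have hS : S (n + 1) x y := hn
    rcases hprec_total x y hxy hne with hp | hp
    · exact hspan_aux (({z | prec x z ∧ prec z y}).ncard + 1) (n + 1) x y hS hp (by omega)
    · refine hRTGsymm y x ?_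
      exact hspan_aux (({z | prec y z ∧ prec z x}).ncard + 1) (n + 1) y x
        ((hSeq (n + 1)).symm hS) hp (by omega)
  -- degree bound
  have hdeg : ∀ x, ({y | E x y}).encard ≤ 2 := by
    intro x
    have hsucc : ∀ y y', adj x y → adj x y' → y = y' := by
      intro y y' h1 h2
      by_contra hne
      have hRyy' : R y y' := hR.trans (hR.symm (hprec_R x y h1.1)) (hprec_R x y' h2.1)
      rcases hprec_total y y' hRyy' hne with hp | hp
      · exact hadj_nb x y' h2 y ⟨h1.1, hp⟩
      · exact hadj_nb x y h1 y' ⟨h2.1, hp⟩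
    have hpred : ∀ y y', adj y x → adj y' x → y = y' := by
      intro y y' h1 h2
      by_contra hne
      have hRyy' : R y y' := hR.trans (hprec_R y x h1.1) (hR.symm (hprec_R y' x h2.1))
      rcases hprec_total y y' hRyy' hne with hp | hp
      · exact hadj_nb y x h1 y' ⟨hp, h2.1⟩
      · exact hadj_nb y' x h2 y ⟨hp, h1.1⟩
    have hsub : {y | E x y} ⊆ {y | adj x y} ∪ {y | adj y x} := by
      rintro y (h | h)
      · exact Or.inl h
      · exact Or.inr h
    calc ({y | E x y}).encard ≤ ({y | adj x y} ∪ {y | adj y x}).encard :=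
          Set.encard_mono hsub
      _ ≤ ({y | adj x y}).encard + ({y | adj y x}).encard := Set.encard_union_le _ _
      _ ≤ 1 + 1 := by
          apply add_le_add
          · rw [Set.encard_le_one_iff]
            intro a b ha hb
            exact hsucc a b ha hb
          · rw [Set.encard_le_one_iff]
            intro a b ha hb
            exact hpred a b ha hb
      _ = 2 := one_add_one_eq_two
  -- measurability
  have hEmeas : MeasurableSet {q : X × X | E q.1 q.2} := by
    have hprecmeas : MeasurableSet {q : X × X | prec q.1 q.2} := by
      have he : {q : X × X | prec q.1 q.2} =
          ⋃ n, ({q : X × X | S (n + 1) q.1 q.2} ∩ ({q : X × X | S n q.1 q.2})ᶜ ∩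
            {q : X × X | h n q.1 < h n q.2}) := by
        ext q
        simp only [Set.mem_iUnion, Set.mem_inter_iff, Set.mem_compl_iff, Set.mem_setOf_eq,
          hprecdef]
        constructor
        · rintro ⟨n, h1, h2, h3⟩; exact ⟨n, ⟨h1, h2⟩, h3⟩
        · rintro ⟨n, ⟨h1, h2⟩, h3⟩; exact ⟨n, h1, h2, h3⟩
      rw [he]
      refine MeasurableSet.iUnion fun n => ?_
      refine ((hSmeas (n + 1)).inter (hSmeas n).compl).inter ?_
      exact measurableSet_lt ((hhm n).comp measurable_fst) ((hhm n).comp measurable_snd)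
    have hadjmeas : MeasurableSet {q : X × X | adj q.1 q.2} := by
      have he : {q : X × X | adj q.1 q.2} =
          {q : X × X | prec q.1 q.2} ∩
            ⋂ i, (((fun q : X × X => (q.1, g i q.1)) ⁻¹' {q : X × X | prec q.1 q.2}) ∩
              ((fun q : X × X => (g i q.1, q.2)) ⁻¹' {q : X × X | prec q.1 q.2}))ᶜ := by
        ext q
        simp only [Set.mem_inter_iff, Set.mem_iInter, Set.mem_compl_iff, Set.mem_preimage,
          Set.mem_setOf_eq, hadjdef]
      rw [he]
      refine hprecmeas.inter (MeasurableSet.iInter fun i => ?_)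
      refine (MeasurableSet.inter ?_ ?_).compl
      · exact (measurable_fst.prodMk ((hgm i).comp measurable_fst)) hprecmeas
      · exact (((hgm i).comp measurable_fst).prodMk measurable_snd) hprecmeas
    have he : {q : X × X | E q.1 q.2} =
        {q : X × X | adj q.1 q.2} ∪ Prod.swap ⁻¹' {q : X × X | adj q.1 q.2} := by
      ext q
      simp only [Set.mem_union, Set.mem_preimage, Set.mem_setOf_eq, hEdef, Prod.fst_swap,
        Prod.snd_swap]
    rw [he]
    exact hadjmeas.union (measurable_swap hadjmeas)
  exact ⟨E, hEsymm, hEsub, hspan, hEmeas, hdeg⟩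

end CostProof


/-- A hyperfinite equivalence relation (an increasing union of measurable subrelations with
all classes finite) has cost at most 1. -/
theorem stmt8 {X : Type*} [MeasurableSpace X] [StandardBorelSpace X]
    (μ : Measure X) [IsProbabilityMeasure μ]
    (R : X → X → Prop) (hR : Equivalence R)
    (hcount : ∀ x, {y | R x y}.Countable)
    (Rn : ℕ → X → X → Prop) (hRn : ∀ n, Equivalence (Rn n))
    (hmeasn : ∀ n, MeasurableSet {q : X × X | Rn n q.1 q.2})
    (hmono : ∀ n x y, Rn n x y → Rn (n + 1) x y)
    (hfin : ∀ n x, {y | Rn n x y}.Finite)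
    (hunion : ∀ x y, R x y ↔ ∃ n, Rn n x y) :
    relCost X μ R ≤ 1 := by
  obtain ⟨E, hEsymm, hEsub, hspan, hEmeas, hdeg⟩ :=
    CostProof.cost_le_one μ R hR Rn hRn hmeasn hmono hfin hunion
  have hle : relCost X μ R ≤ (Graphing.mk E hEsymm hEsub hspan hEmeas : Graphing X μ R).cost := by
    rw [relCost]
    exact iInf_le _ _
  refine hle.trans ?_
  rw [Graphing.cost]
  have hint : ∫⁻ x, (({y | E x y}).encard : ℝ≥0∞) ∂μ ≤ ∫⁻ _, (2 : ℝ≥0∞) ∂μ := by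
    apply lintegral_mono
    intro x
    have h2 := hdeg x
    calc (({y | E x y}).encard : ℝ≥0∞) ≤ ((2 : ℕ∞) : ℝ≥0∞) := ENat.toENNReal_le.2 h2
      _ = 2 := by simp
  calc (1 / 2 : ℝ≥0∞) * ∫⁻ x, (({y | E x y}).encard : ℝ≥0∞) ∂μ
      ≤ (1 / 2 : ℝ≥0∞) * ∫⁻ _, (2 : ℝ≥0∞) ∂μ := mul_le_mul_right hint _
    _ = (1 / 2 : ℝ≥0∞) * 2 := by rw [lintegral_const, measure_univ, mul_one]
    _ = 1 := by
        rw [one_div, ENNReal.inv_mul_cancel]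
        · exact two_ne_zero
        · exact ENNReal.ofNat_ne_top
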